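/- A probability distribution P factors according to A if and only if P lies in the nonnegative toric variety X_A and the support of P is A-feasible. -/

import Mathlib

/-- A real vector orthogonal to every integer kernel vector of an integer matrix
lies in the real row span of the matrix. -/
lemma int_dual_span {n : ℕ} : ∀ (k : ℕ) (R : Fin k → Fin n → ℤ) (y : Fin n → ℝ),
    (∀ w : Fin n → ℤ, (∀ i, ∑ j, R i j * w j = 0) → ∑ j, (w j : ℝ) * y j = 0) →
    ∃ x : Fin k → ℝ, ∀ j, y j = ∑ i, x i * (R i j : ℝ) := by
  intro k
  induction k with
  | zero =>
    intro R y hy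
    refine ⟨fun i => 0, fun j => ?_⟩
    have h := hy (Pi.single j 1) (fun i => i.elim0)
    simp [Pi.single_apply] at h
    simp [h]
  | succ k ih =>
    intro R y hy
    by_cases hc : ∀ w : Fin n → ℤ, (∀ i : Fin k, ∑ j, R i.succ j * w j = 0) →
        ∑ j, R 0 j * w j = 0
    · obtain ⟨x', hx'⟩ := ih (fun i => R i.succ) y
        (fun w hw => hy w (fun i => Fin.cases (hc w hw) hw i))
      refine ⟨Fin.cons 0 x', fun j => ?_⟩
      rw [Fin.sum_univ_succ]
      simpa using hx' j
    · push_neg at hc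
      obtain ⟨w₀, hw₀, hα⟩ := hc
      set α : ℤ := ∑ j, R 0 j * w₀ j with hαdef
      have hαR : ((α : ℝ)) ≠ 0 := Int.cast_ne_zero.mpr hα
      set β : ℝ := ∑ j, (w₀ j : ℝ) * y j with hβdef
      set γ : ℝ := β / (α : ℝ) with hγdef
      have hy' : ∀ w : Fin n → ℤ, (∀ i : Fin k, ∑ j, R i.succ j * w j = 0) →
          ∑ j, (w j : ℝ) * (y j - γ * (R 0 j : ℝ)) = 0 := by
        intro w hw
        set δ : ℤ := ∑ j, R 0 j * w j with hδdef
        have hkey : (α : ℝ) * (∑ j, (w j : ℝ) * y j) - (δ : ℝ) * β = 0 := by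
          have h := hy (fun j => α * w j - δ * w₀ j) ?_
          · calc (α : ℝ) * (∑ j, (w j : ℝ) * y j) - (δ : ℝ) * β
                = ∑ j, ((α * w j - δ * w₀ j : ℤ) : ℝ) * y j := by
                  rw [hβdef, Finset.mul_sum, Finset.mul_sum, ← Finset.sum_sub_distrib]
                  congr 1; funext j; push_cast; ring
              _ = 0 := h
          · intro i
            refine Fin.cases ?_ ?_ i
            · have : ∑ j, R 0 j * (α * w j - δ * w₀ j) =
                  α * (∑ j, R 0 j * w j) - δ * (∑ j, R 0 j * w₀ j) := by
                rw [Finset.mul_sum, Finset.mul_sum, ← Finset.sum_sub_distrib]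
                congr 1; funext j; ring
              rw [this, ← hδdef, ← hαdef]; ring
            · intro i
              have : ∑ j, R i.succ j * (α * w j - δ * w₀ j) =
                  α * (∑ j, R i.succ j * w j) - δ * (∑ j, R i.succ j * w₀ j) := by
                rw [Finset.mul_sum, Finset.mul_sum, ← Finset.sum_sub_distrib]
                congr 1; funext j; ring
              rw [this, hw i, hw₀ i]; ring
        have hsum : ∑ j, (w j : ℝ) * (y j - γ * (R 0 j : ℝ)) =
            (∑ j, (w j : ℝ) * y j) - γ * (δ : ℝ) := by
          rw [hδdef]
          push_cast
          rw [Finset.mul_sum, ← Finset.sum_sub_distrib]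
          congr 1; funext j; ring
        rw [hsum, hγdef]
        field_simp
        linarith [hkey]
      obtain ⟨x', hx'⟩ := ih (fun i => R i.succ) (fun j => y j - γ * (R 0 j : ℝ)) hy'
      refine ⟨Fin.cons γ x', fun j => ?_⟩
      rw [Fin.sum_univ_succ]
      have := hx' j
      simp only [Fin.cons_zero, Fin.cons_succ]
      linarith

/-- Factorization theorem: A probability distribution `P` factors according
to `A` if and only if `P` lies in the nonnegative toric variety `X_A` and the support of
`P` is `A`-feasible. -/
theorem factorization_iff_toric_and_feasible {d m : ℕ} (A : Matrix (Fin d) (Fin m) ℕ)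
    (P : Fin m → ℝ) (hP : ∀ j, 0 ≤ P j) (hsum : ∑ j, P j = 1) :
    (∃ t : Fin d → ℝ, (∀ i, 0 ≤ t i) ∧ ∀ j, P j = ∏ i, t i ^ A i j) ↔
      ((∀ u v : Fin m → ℕ, (∀ i, ∑ j, A i j * u j = ∑ j, A i j * v j) →
          ∏ j, P j ^ u j = ∏ j, P j ^ v j) ∧
        ∀ j : Fin m, P j = 0 →
          ¬ ({i : Fin d | A i j ≠ 0} ⊆ ⋃ l ∈ {l : Fin m | P l ≠ 0}, {i : Fin d | A i l ≠ 0})) := by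

  constructor
  · rintro ⟨t, ht0, htP⟩
    constructor
    · intro u v huv
      have key : ∀ q : Fin m → ℕ, ∏ j, P j ^ q j = ∏ i, t i ^ (∑ j, A i j * q j) := by
        intro q
        calc ∏ j, P j ^ q j = ∏ j, ∏ i, t i ^ (A i j * q j) := by
              refine Finset.prod_congr rfl fun j _ => ?_
              rw [htP j, ← Finset.prod_pow]
              exact Finset.prod_congr rfl fun i _ => (pow_mul _ _ _).symm
          _ = ∏ i, ∏ j, t i ^ (A i j * q j) := Finset.prod_comm
          _ = ∏ i, t i ^ (∑ j, A i j * q j) := by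
              refine Finset.prod_congr rfl fun i _ => ?_
              rw [← Finset.prod_pow_eq_pow_sum]
      rw [key u, key v]
      exact Finset.prod_congr rfl fun i _ => by rw [huv i]
    · intro j hPj hsub
      have h0 : ∏ i, t i ^ A i j = 0 := by rw [← htP j]; exact hPj
      obtain ⟨i, -, hi⟩ := Finset.prod_eq_zero_iff.mp h0
      have hti : t i = 0 ∧ A i j ≠ 0 := by
        exact pow_eq_zero_iff'.mp hi
      have : i ∈ ⋃ l ∈ {l : Fin m | P l ≠ 0}, {i : Fin d | A i l ≠ 0} := hsub hti.2
      simp only [Set.mem_iUnion, Set.mem_setOf_eq] at this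
      obtain ⟨l, hPl, hAil⟩ := this
      apply hPl
      rw [htP l]
      exact Finset.prod_eq_zero (Finset.mem_univ i) (by rw [hti.1, zero_pow hAil])
  · rintro ⟨hrel, hfeas⟩
    classical
    -- rows of the augmented matrix
    set R : Fin (d + m) → Fin m → ℤ := fun i =>
      Fin.addCases (fun i' j => (A i' j : ℤ))
        (fun j' j => if P j' = 0 ∧ j = j' then 1 else 0) i with hR
    have hlog : ∀ q : Fin m → ℕ, (∀ j, P j = 0 → q j = 0) →
        Real.log (∏ j, P j ^ q j) = ∑ j, (q j : ℝ) * Real.log (P j) := by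
      intro q hq
      rw [Real.log_prod (fun j _ => ?_)]
      · exact Finset.sum_congr rfl fun j _ => by rw [Real.log_pow]
      · by_cases h : P j = 0
        · rw [h, hq j h, pow_zero]; exact one_ne_zero
        · exact pow_ne_zero _ h
    -- the orthogonality hypothesis for the elimination lemma
    have hy : ∀ w : Fin m → ℤ, (∀ i, ∑ j, R i j * w j = 0) →
        ∑ j, (w j : ℝ) * Real.log (P j) = 0 := by
      intro w hw
      have hwA : ∀ i' : Fin d, ∑ j, (A i' j : ℤ) * w j = 0 := by
        intro i'
        have := hw (Fin.castAdd m i')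
        simpa [hR, Fin.addCases_left] using this
      have hw0 : ∀ j', P j' = 0 → w j' = 0 := by
        intro j' hPj'
        have := hw (Fin.natAdd d j')
        simp only [hR, Fin.addCases_right] at this
        rw [Finset.sum_eq_single j'] at this
        · simpa [hPj'] using this
        · intro b _ hb
          simp [hb]
        · simp
      set u : Fin m → ℕ := fun j => (w j).toNat with hu
      set v : Fin m → ℕ := fun j => (-(w j)).toNat with hv
      have hwuv : ∀ j, (w j : ℤ) = (u j : ℤ) - (v j : ℤ) := fun j =>
        (Int.toNat_sub_toNat_neg (w j)).symm
      have hu0 : ∀ j, P j = 0 → u j = 0 := by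
        intro j hj; simp [hu, hw0 j hj]
      have hv0 : ∀ j, P j = 0 → v j = 0 := by
        intro j hj; simp [hv, hw0 j hj]
      have hAuv : ∀ i, ∑ j, A i j * u j = ∑ j, A i j * v j := by
        intro i
        have h := hwA i
        have : (∑ j, (A i j : ℤ) * u j) - (∑ j, (A i j : ℤ) * v j) = 0 := by
          rw [← Finset.sum_sub_distrib, ← h]
          exact Finset.sum_congr rfl fun j _ => by rw [hwuv j]; ring
        have h2 : (∑ j, (A i j : ℤ) * u j) = ∑ j, (A i j : ℤ) * v j := by linarith
        exact_mod_cast h2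
      have hprod := hrel u v hAuv
      have h1 := hlog u hu0
      have h2 := hlog v hv0
      calc ∑ j, (w j : ℝ) * Real.log (P j)
          = (∑ j, (u j : ℝ) * Real.log (P j)) - ∑ j, (v j : ℝ) * Real.log (P j) := by
            rw [← Finset.sum_sub_distrib]
            refine Finset.sum_congr rfl fun j _ => ?_
            have : (w j : ℝ) = (u j : ℝ) - (v j : ℝ) := by exact_mod_cast congrArg (Int.cast : ℤ → ℝ) (hwuv j)
            rw [this]; ring
        _ = 0 := by rw [← h1, ← h2, hprod, sub_self]
    obtain ⟨x, hx⟩ := int_dual_span (d + m) R (fun j => Real.log (P j)) hy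
    -- for j in the support, only the A-rows contribute
    have hxF : ∀ j, P j ≠ 0 →
        Real.log (P j) = ∑ i' : Fin d, x (Fin.castAdd m i') * (A i' j : ℝ) := by
      intro j hPj
      rw [hx j, Fin.sum_univ_add]
      have hzero : ∑ i' : Fin m, x (Fin.natAdd d i') * ((R (Fin.natAdd d i') j : ℤ) : ℝ) = 0 := by
        refine Finset.sum_eq_zero fun j' _ => ?_
        simp only [hR, Fin.addCases_right]
        rcases eq_or_ne j j' with rfl | hne
        · simp [hPj]
        · simp [hne]
      rw [hzero, add_zero]
      exact Finset.sum_congr rfl fun i' _ => by simp [hR, Fin.addCases_left]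
    refine ⟨fun i => if ∀ l, P l ≠ 0 → A i l = 0 then 0 else Real.exp (x (Fin.castAdd m i)),
      fun i => ?_, ?_⟩
    · dsimp only
      split
      · exact le_rfl
      · exact (Real.exp_pos _).le
    intro j
    by_cases hPj : P j = 0
    · obtain ⟨i₀, hi₀A, hi₀not⟩ := Set.not_subset.mp (hfeas j hPj)
      simp only [Set.mem_iUnion, Set.mem_setOf_eq, not_exists] at hi₀not hi₀A
      have hzi : ∀ l, P l ≠ 0 → A i₀ l = 0 := by
        intro l hl
        by_contra h
        exact hi₀not l hl h
      rw [hPj]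
      symm
      refine Finset.prod_eq_zero (Finset.mem_univ i₀) ?_
      dsimp only
      rw [if_pos hzi, zero_pow hi₀A]
    · have hfactor : ∀ i, (if ∀ l, P l ≠ 0 → A i l = 0 then (0:ℝ)
          else Real.exp (x (Fin.castAdd m i))) ^ A i j
          = Real.exp (x (Fin.castAdd m i) * (A i j : ℝ)) := by
        intro i
        by_cases hz : ∀ l, P l ≠ 0 → A i l = 0
        · rw [if_pos hz, hz j hPj]
          simp
        · rw [if_neg hz, ← Real.exp_nat_mul, mul_comm]
      calc P j = Real.exp (Real.log (P j)) := (Real.exp_log ((hP j).lt_of_ne (Ne.symm hPj))).symm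
        _ = Real.exp (∑ i' : Fin d, x (Fin.castAdd m i') * (A i' j : ℝ)) := by rw [hxF j hPj]
        _ = ∏ i' : Fin d, Real.exp (x (Fin.castAdd m i') * (A i' j : ℝ)) := Real.exp_sum _ _
        _ = _ := (Finset.prod_congr rfl fun i _ => (hfactor i).symm)
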